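/- Let H be a Hilbert space, (g_i) a frame for H with analysis operator U. Every dual frame (f_i) of (g_i) has the form f_i = L δᵢ for some bounded operator L : ℓ² → H with L U = id_H. -/

import Mathlib

open scoped RealInnerProductSpace

/-- Every dual frame `(fᵢ)` of a frame `(gᵢ)` has the form `fᵢ = L δᵢ` with `L : ℓ² → H`
bounded and `L U = id`. -/
theorem stmt_11 (H : Type*) [NormedAddCommGroup H] [InnerProductSpace ℝ H] [CompleteSpace H]
    (g : ℕ → H)
    (hframe : ∃ A B : ℝ, 0 < A ∧ 0 < B ∧ ∀ f : H,
      Summable (fun i => ⟪f, g i⟫ ^ 2) ∧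
      A * ‖f‖ ^ 2 ≤ ∑' i, ⟪f, g i⟫ ^ 2 ∧ ∑' i, ⟪f, g i⟫ ^ 2 ≤ B * ‖f‖ ^ 2)
    (U : H →L[ℝ] lp (fun _ : ℕ => ℝ) 2) (hU : ∀ (f : H) (i : ℕ), U f i = ⟪f, g i⟫)
    (F : ℕ → H)
    (hFframe : ∃ A B : ℝ, 0 < A ∧ 0 < B ∧ ∀ f : H,
      Summable (fun i => ⟪f, F i⟫ ^ 2) ∧
      A * ‖f‖ ^ 2 ≤ ∑' i, ⟪f, F i⟫ ^ 2 ∧ ∑' i, ⟪f, F i⟫ ^ 2 ≤ B * ‖f‖ ^ 2)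
    (hdual : ∀ f : H, Filter.Tendsto (fun n => ∑ i ∈ Finset.range n, ⟪f, g i⟫ • F i)
      Filter.atTop (nhds f)) :
    ∃ L : lp (fun _ : ℕ => ℝ) 2 →L[ℝ] H,
      (∀ f : H, L (U f) = f) ∧ ∀ i : ℕ, F i = L (lp.single 2 i 1) := by
  obtain ⟨A, B, hA, hB, hF⟩ := hFframe
  -- membership in ℓ²
  have hmem : ∀ f : H, Memℓp (fun i => ⟪f, F i⟫) 2 := by
    intro f
    apply memℓp_gen
    have hs := (hF f).1
    have : (fun i => ‖⟪f, F i⟫‖ ^ (2 : ENNReal).toReal) = fun i => ⟪f, F i⟫ ^ 2 := by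
      funext i
      simp [ENNReal.toReal_ofNat]
    rw [this]
    exact hs
  -- the analysis operator of F as a linear map
  let Vlin : H →ₗ[ℝ] lp (fun _ : ℕ => ℝ) 2 :=
    { toFun := fun f => ⟨fun i => ⟪f, F i⟫, hmem f⟩
      map_add' := by
        intro a b
        apply Subtype.ext
        funext i
        exact inner_add_left _ _ _
      map_smul' := by
        intro c a
        apply Subtype.ext
        funext i
        exact real_inner_smul_left _ _ _ }
  have hVapp : ∀ (f : H) (i : ℕ), (Vlin f : ∀ _ : ℕ, ℝ) i = ⟪f, F i⟫ := fun _ _ => rfl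
  -- boundedness
  have hVbound : ∀ f : H, ‖Vlin f‖ ≤ Real.sqrt B * ‖f‖ := by
    intro f
    have h1 : ‖Vlin f‖ ^ 2 = ∑' i, ⟪f, F i⟫ ^ 2 := by
      rw [← real_inner_self_eq_norm_sq]
      rw [lp.inner_eq_tsum]
      congr 1
      funext i
      simp [hVapp, sq, RCLike.inner_apply]
    have h2 : ‖Vlin f‖ ^ 2 ≤ B * ‖f‖ ^ 2 := h1 ▸ (hF f).2.2
    calc ‖Vlin f‖ = Real.sqrt (‖Vlin f‖ ^ 2) := (Real.sqrt_sq (norm_nonneg _)).symm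
      _ ≤ Real.sqrt (B * ‖f‖ ^ 2) := Real.sqrt_le_sqrt h2
      _ = Real.sqrt B * ‖f‖ := by
          rw [Real.sqrt_mul hB.le, Real.sqrt_sq (norm_nonneg _)]
  let V : H →L[ℝ] lp (fun _ : ℕ => ℝ) 2 := Vlin.mkContinuous (Real.sqrt B) hVbound
  have hVapp' : ∀ (f : H) (i : ℕ), (V f : ∀ _ : ℕ, ℝ) i = ⟪f, F i⟫ := fun _ _ => rfl
  refine ⟨ContinuousLinearMap.adjoint V, ?_, ?_⟩
  · intro f
    apply ext_inner_right ℝ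
    intro h
    rw [ContinuousLinearMap.adjoint_inner_left]
    have hsum : HasSum (fun i => ⟪(U f : ∀ _ : ℕ, ℝ) i, (V h : ∀ _ : ℕ, ℝ) i⟫) ⟪U f, V h⟫ :=
      lp.hasSum_inner (U f) (V h)
    have hsum' : HasSum (fun i => ⟪f, g i⟫ * ⟪h, F i⟫) ⟪U f, V h⟫ := by
      convert hsum using 2 with i
      rw [hU, hVapp', RCLike.inner_apply, starRingEnd_apply, star_trivial, mul_comm]
    have hlim : Filter.Tendsto (fun n => ∑ i ∈ Finset.range n, ⟪f, g i⟫ * ⟪h, F i⟫)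
        Filter.atTop (nhds ⟪f, h⟫) := by
      have h0 : Filter.Tendsto (fun n => ⟪∑ i ∈ Finset.range n, ⟪f, g i⟫ • F i, h⟫)
          Filter.atTop (nhds ⟪f, h⟫) := (hdual f).inner tendsto_const_nhds
      convert h0 using 2 with n
      rw [sum_inner]
      congr 1
      funext i
      rw [real_inner_smul_left, real_inner_comm (F i) h]
    exact tendsto_nhds_unique hsum'.tendsto_sum_nat hlim
  · intro i
    symm
    apply ext_inner_right ℝ
    intro h
    rw [ContinuousLinearMap.adjoint_inner_left, lp.inner_single_left]
    simp [hVapp', RCLike.inner_apply, real_inner_comm]
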